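/- arXiv:1310.1596 — 4 statements merged into one kernel-verified Lean document; each statement's English description precedes it below -/
import Mathlib

section
/- For any field k and any natural numbers m, N, the ∘-product of two block matrices, defined by (A ∘ P) = diag(A,1_N,1_M) · σ(P) where σ embeds P into the blocks (1,3) relative to the splitting m+N+N+M, satisfies: if A' = H A H^{-1} with H = diag(1_m, h) for some invertible h, then A' ∘ P is conjugate to A ∘ P by a matrix of the form diag(1_m, h') with h' invertible. (Well-definedness of the ∘-multiplication on conjugacy classes with respect to the first factor.) -/
open Matrix

section Prelude

variable {R : Type*}

/-- A 3×3 block matrix. -/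
def blk3 {i1 i2 i3 j1 j2 j3 : Type*}
    (A : Matrix i1 j1 R) (B : Matrix i1 j2 R) (C : Matrix i1 j3 R)
    (D : Matrix i2 j1 R) (E : Matrix i2 j2 R) (F : Matrix i2 j3 R)
    (G : Matrix i3 j1 R) (H : Matrix i3 j2 R) (J : Matrix i3 j3 R) :
    Matrix (i1 ⊕ (i2 ⊕ i3)) (j1 ⊕ (j2 ⊕ j3)) R :=
  Matrix.fromBlocks A (Matrix.fromCols B C) (Matrix.fromRows D G)
    (Matrix.fromBlocks E F H J)

/-- The data of a square matrix split into 3×3 blocks with diagonal index types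
`i1`, `i2`, `i3`. -/
structure Blk (R i1 i2 i3 : Type*) where
  a : Matrix i1 i1 R
  b : Matrix i1 i2 R
  c : Matrix i1 i3 R
  d : Matrix i2 i1 R
  e : Matrix i2 i2 R
  f : Matrix i2 i3 R
  g : Matrix i3 i1 R
  h : Matrix i3 i2 R
  j : Matrix i3 i3 R

def Blk.toMatrix {i1 i2 i3 : Type*} (M : Blk R i1 i2 i3) :
    Matrix (i1 ⊕ (i2 ⊕ i3)) (i1 ⊕ (i2 ⊕ i3)) R :=
  blk3 M.a M.b M.c M.d M.e M.f M.g M.h M.j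

/-- The ⋆-product of the paper, on the level of block data:
`A ⋆ P` is the `(j1+i1)+m+(i3+j3)` block matrix
`[[p,0,q,0,r],[bu,a,bv,c,bw],[eu,d,ev,f,ew],[hu,g,hv,j,hw],[x,0,y,0,z]]`. -/
def starB [CommRing R] {i1 m i3 j1 j3 : Type*} [Fintype m]
    (A : Blk R i1 m i3) (P : Blk R j1 m j3) : Blk R (j1 ⊕ i1) m (i3 ⊕ j3) where
  a := Matrix.fromBlocks P.a 0 (A.b * P.d) A.a
  b := Matrix.fromRows P.b (A.b * P.e)
  c := Matrix.fromBlocks 0 P.c A.c (A.b * P.f)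
  d := Matrix.fromCols (A.e * P.d) A.d
  e := A.e * P.e
  f := Matrix.fromCols A.f (A.e * P.f)
  g := Matrix.fromBlocks (A.h * P.d) A.g P.g 0
  h := Matrix.fromRows (A.h * P.e) P.h
  j := Matrix.fromBlocks A.j (A.h * P.f) 0 P.j

/-- The subgroup `P` of block matrices `[[α,φ,θ],[0,1,ψ],[0,0,β]]` with `α`, `β`
invertible. -/
def Pset (R : Type*) [CommRing R] (i1 i2 i3 : Type*)
    [Fintype i1] [Fintype i3] [DecidableEq i1] [DecidableEq i2] [DecidableEq i3] :
    Set (Matrix (i1 ⊕ (i2 ⊕ i3)) (i1 ⊕ (i2 ⊕ i3)) R) :=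
  {gm | ∃ (α : Matrix i1 i1 R) (φ : Matrix i1 i2 R) (θ : Matrix i1 i3 R)
      (ψ : Matrix i2 i3 R) (β : Matrix i3 i3 R),
    IsUnit α ∧ IsUnit β ∧ gm = blk3 α φ θ 0 1 ψ 0 0 β}

end Prelude

/-- The `∘`-product of `[[a,b],[c,d]]` (size `m+i`) and `[[p,q],[r,t]]` (size `m+j`):
the block matrix `[[ap,b,aq],[cp,d,cq],[r,0,t]]` of size `m+i+j`. -/
def circ {R : Type*} [CommRing R] {m i j : Type*} [Fintype m]
    (a : Matrix m m R) (b : Matrix m i R) (c : Matrix i m R) (d : Matrix i i R)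
    (p : Matrix m m R) (q : Matrix m j R) (r : Matrix j m R) (t : Matrix j j R) :
    Matrix (m ⊕ (i ⊕ j)) (m ⊕ (i ⊕ j)) R :=
  blk3 (a * p) b (a * q) (c * p) d (c * q) r 0 t

/-- the `∘`-product is well defined on conjugacy classes with respect to the
first factor: if `A' = H A H⁻¹` with `H = diag(1_m,h)`, `h` invertible, then `A' ∘ P` is
conjugate to `A ∘ P` by a matrix `diag(1_m,h')` with `h'` invertible. -/
theorem stmt1 {k : Type*} [Field k] {m N : ℕ}
    (a : Matrix (Fin m) (Fin m) k) (b : Matrix (Fin m) (Fin N) k)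
    (c : Matrix (Fin N) (Fin m) k) (d : Matrix (Fin N) (Fin N) k)
    (p : Matrix (Fin m) (Fin m) k) (q : Matrix (Fin m) (Fin N) k)
    (r : Matrix (Fin N) (Fin m) k) (t : Matrix (Fin N) (Fin N) k)
    (h : Matrix (Fin N) (Fin N) k) (hh : IsUnit h) :
    ∃ h' : Matrix (Fin N ⊕ Fin N) (Fin N ⊕ Fin N) k, IsUnit h' ∧
      circ a (b * h⁻¹) (h * c) (h * d * h⁻¹) p q r t =
        Matrix.fromBlocks (1 : Matrix (Fin m) (Fin m) k) 0 0 h' *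
          circ a b c d p q r t *
          (Matrix.fromBlocks (1 : Matrix (Fin m) (Fin m) k) 0 0 h')⁻¹ := by
  have hdet : IsUnit h.det := (Matrix.isUnit_iff_isUnit_det h).mp hh
  have hinv : h * h⁻¹ = 1 := Matrix.mul_nonsing_inv h hdet
  have hinv' : h⁻¹ * h = 1 := Matrix.nonsing_inv_mul h hdet
  refine ⟨Matrix.fromBlocks h 0 0 (1 : Matrix (Fin N) (Fin N) k), ?_, ?_⟩
  · rw [Matrix.isUnit_iff_isUnit_det, Matrix.det_fromBlocks_zero₂₁]
    simpa using hdet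
  · have hGinv : (Matrix.fromBlocks (1 : Matrix (Fin m) (Fin m) k) 0 0
        (Matrix.fromBlocks h 0 0 (1 : Matrix (Fin N) (Fin N) k)))⁻¹ =
        Matrix.fromBlocks (1 : Matrix (Fin m) (Fin m) k) 0 0
          (Matrix.fromBlocks h⁻¹ 0 0 (1 : Matrix (Fin N) (Fin N) k)) := by
      apply Matrix.inv_eq_right_inv
      simp [Matrix.fromBlocks_multiply, hinv]
    rw [hGinv]
    simp only [circ, blk3, Matrix.fromBlocks_multiply, Matrix.fromBlocks_mul_fromRows,
      Matrix.fromCols_mul_fromBlocks, Matrix.mul_fromCols, Matrix.fromRows_mul,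
      Matrix.one_mul, Matrix.mul_one, Matrix.zero_mul, Matrix.mul_zero, add_zero, zero_add,
      Matrix.mul_assoc]
end

section
/- With the star-product as defined, for any n×m matrix φ one has ([[a,b,c],[d,e,f],[g,h,j]]·[[1,φ,0],[0,1,0],[0,0,1]]) ⋆ p = (a⋆p) · Γ, where Γ is the block matrix [[1,0,0,0,0],[φu,1,φv,0,φw],[0,0,1,0,0],[0,0,0,1,0],[0,0,0,0,1]] (relative to splitting N+N+m+N+N), which lies in the parabolic-type subgroup P. -/
open Matrix

section Prelude

variable {R : Type*}

lemma fromRows_add' {R m1 m2 n : Type*} [Add R] (A C : Matrix m1 n R) (B D : Matrix m2 n R) :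
    Matrix.fromRows A B + Matrix.fromRows C D = Matrix.fromRows (A + C) (B + D) := by
  ext (i|i) j <;> rfl

lemma fromColumns_add' {R m n1 n2 : Type*} [Add R] (A C : Matrix m n1 R) (B D : Matrix m n2 R) :
    Matrix.fromCols A B + Matrix.fromCols C D = Matrix.fromCols (A + C) (B + D) := by
  ext i (j|j) <;> rfl

end Prelude

/-- `(a · [[1,φ,0],[0,1,0],[0,0,1]]) ⋆ p = (a ⋆ p) · Γ`, where
`Γ = [[1,0,0,0,0],[φu,1,φv,0,φw],[0,0,1,0,0],[0,0,0,1,0],[0,0,0,0,1]]` (relative to the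
splitting `(N+N)+m+(N+N)`), and `Γ` lies in the parabolic-type subgroup `P`. -/
theorem stmt6 {k : Type*} [Field k] {m N : ℕ}
    (A P : Blk k (Fin N) (Fin m) (Fin N)) (φ : Matrix (Fin N) (Fin m) k) :
    (starB ⟨A.a, A.a * φ + A.b, A.c, A.d, A.d * φ + A.e, A.f,
        A.g, A.g * φ + A.h, A.j⟩ P).toMatrix
      = (starB A P).toMatrix *
        blk3 (Matrix.fromBlocks 1 0 (φ * P.d) 1) (Matrix.fromRows 0 (φ * P.e))
          (Matrix.fromBlocks 0 0 0 (φ * P.f)) 0 (1 : Matrix (Fin m) (Fin m) k) 0 0 0 1 ∧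
    blk3 (Matrix.fromBlocks 1 0 (φ * P.d) 1) (Matrix.fromRows 0 (φ * P.e))
        (Matrix.fromBlocks 0 0 0 (φ * P.f)) 0 (1 : Matrix (Fin m) (Fin m) k) 0 0 0 1
      ∈ Pset k (Fin N ⊕ Fin N) (Fin m) (Fin N ⊕ Fin N) := by
  constructor
  · simp only [Blk.toMatrix, blk3, starB, Matrix.fromBlocks_multiply,
      Matrix.fromRows_mul, Matrix.mul_fromCols, Matrix.fromCols_mul_fromBlocks,
      Matrix.fromBlocks_mul_fromRows, Matrix.fromRows_mul_fromCols,
      Matrix.fromCols_mul_fromRows, Matrix.mul_one, Matrix.one_mul, Matrix.mul_zero,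
      Matrix.zero_mul, add_zero, zero_add, Matrix.mul_assoc, Matrix.add_mul,
      fromRows_add', fromColumns_add', Matrix.fromBlocks_add]
    simp [fromRows_add', fromColumns_add', Matrix.fromBlocks_add, add_comm]
  · refine ⟨Matrix.fromBlocks 1 0 (φ * P.d) 1, Matrix.fromRows 0 (φ * P.e),
      Matrix.fromBlocks 0 0 0 (φ * P.f), 0, 1, ?_, isUnit_one, rfl⟩
    refine ⟨⟨Matrix.fromBlocks 1 0 (φ * P.d) 1, Matrix.fromBlocks 1 0 (-(φ * P.d)) 1, ?_, ?_⟩, rfl⟩ <;>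
      simp only [Matrix.fromBlocks_multiply, Matrix.one_mul, Matrix.mul_one, Matrix.mul_zero, Matrix.zero_mul, add_zero, zero_add, add_neg_cancel, neg_add_cancel, Matrix.fromBlocks_one]
end

section
/- With the star-product defined by a⋆p = a·J·p·J (where J is the block swap matrix exchanging the two N-blocks on each side of the middle m-block), the operation is associative up to enlarging N: concretely, for block matrices of size N+m+N embedded into (N+N+N)+m+(N+N+N), one has (a⋆p)⋆q and a⋆(p⋆q) equal up to conjugation by a block permutation matrix of the form diag(σ,1_m,τ) where σ,τ are permutation matrices. -/
open Matrix

/-- Auxiliary: the two groupings of the ⋆-product agree on the nose after the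
canonical reindexing (no permutation needed). -/
theorem starB_assoc_key {k : Type*} [Field k] {m N : ℕ}
    (A P Q : Blk k (Fin N) (Fin m) (Fin N)) :
    (starB (starB A P) Q).toMatrix =
        Matrix.reindex
            (Equiv.sumCongr (Equiv.sumAssoc (Fin N) (Fin N) (Fin N))
              (Equiv.sumCongr (Equiv.refl (Fin m))
                (Equiv.sumAssoc (Fin N) (Fin N) (Fin N)).symm))
            (Equiv.sumCongr (Equiv.sumAssoc (Fin N) (Fin N) (Fin N))
              (Equiv.sumCongr (Equiv.refl (Fin m))
                (Equiv.sumAssoc (Fin N) (Fin N) (Fin N)).symm))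
            (starB A (starB P Q)).toMatrix := by
  ext i j
  rcases i with (i|(i|i)|i) | (i | ((i|i)|i)) <;>
  rcases j with (j|(j|j)|j) | (j | ((j|j)|j)) <;>
  simp [Blk.toMatrix, blk3, starB, Matrix.fromRows_mul, Matrix.mul_fromCols,
    Matrix.fromBlocks_apply₁₁, Matrix.fromBlocks_apply₁₂, Matrix.fromBlocks_apply₂₁,
    Matrix.fromBlocks_apply₂₂, Matrix.fromRows_apply_inl, Matrix.fromRows_apply_inr,
    Matrix.fromCols_apply_inl, Matrix.fromCols_apply_inr, Matrix.reindex_apply,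
    Matrix.submatrix_apply, Equiv.sumCongr_apply, Equiv.sumAssoc, Matrix.mul_assoc]

lemma blk3_one_perm {k : Type*} [Field k] {m : ℕ} {i1 i3 : Type*} [Fintype i1]
    [Fintype i3] [DecidableEq i1] [DecidableEq i3] :
    (blk3 (((1 : Equiv.Perm i1).permMatrix k)) 0 0 0 (1 : Matrix (Fin m) (Fin m) k) 0
      0 0 (((1 : Equiv.Perm i3).permMatrix k))) = 1 := by
  have h1 : ((1 : Equiv.Perm i1).permMatrix k) = 1 := by
    simp [Equiv.Perm.permMatrix, Equiv.Perm.one_def, Equiv.toPEquiv_refl,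
      PEquiv.toMatrix_refl]
  have h3 : ((1 : Equiv.Perm i3).permMatrix k) = 1 := by
    simp [Equiv.Perm.permMatrix, Equiv.Perm.one_def, Equiv.toPEquiv_refl,
      PEquiv.toMatrix_refl]
  ext i j
  rcases i with i | (i|i) <;> rcases j with j | (j|j) <;>
    simp [blk3, h1, h3, Matrix.fromBlocks, Matrix.fromRows, Matrix.fromCols,
      Matrix.one_apply, Sum.elim, Matrix.of_apply, Pi.single_apply, eq_comm]

/-- the ⋆-multiplication is associative up to regrouping of blocks:
`(a⋆p)⋆q` and `a⋆(p⋆q)` (block matrices of splitting `(N+N+N)+m+(N+N+N)`) coincide up to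
conjugation by a block permutation matrix `diag(σ,1_m,τ)` with `σ`, `τ` permutation
matrices (after the canonical identification of the two groupings of the outer blocks). -/
theorem stmt11 {k : Type*} [Field k] {m N : ℕ}
    (A P Q : Blk k (Fin N) (Fin m) (Fin N)) :
    ∃ (σ : Equiv.Perm (Fin N ⊕ (Fin N ⊕ Fin N))) (τ : Equiv.Perm ((Fin N ⊕ Fin N) ⊕ Fin N)),
      (starB (starB A P) Q).toMatrix =
        blk3 (σ.permMatrix k) 0 0 0 (1 : Matrix (Fin m) (Fin m) k) 0 0 0 (τ.permMatrix k) *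
          Matrix.reindex
            (Equiv.sumCongr (Equiv.sumAssoc (Fin N) (Fin N) (Fin N))
              (Equiv.sumCongr (Equiv.refl (Fin m))
                (Equiv.sumAssoc (Fin N) (Fin N) (Fin N)).symm))
            (Equiv.sumCongr (Equiv.sumAssoc (Fin N) (Fin N) (Fin N))
              (Equiv.sumCongr (Equiv.refl (Fin m))
                (Equiv.sumAssoc (Fin N) (Fin N) (Fin N)).symm))
            (starB A (starB P Q)).toMatrix *
          (blk3 (σ.permMatrix k) 0 0 0 (1 : Matrix (Fin m) (Fin m) k) 0 0 0
            (τ.permMatrix k))⁻¹ := by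
  refine ⟨1, 1, ?_⟩
  rw [blk3_one_perm, inv_one, one_mul, mul_one]
  exact starB_assoc_key A P Q
end

section
/- The ∘-product on block matrices of size m+n given by [[a,b],[c,d]] ∘ [[p,q],[r,t]] = [[ap, b, aq],[cp, d, cq],[r, 0, t]] (size m+n+n) satisfies: the upper-left m×m block of the triple product (A∘P)∘Q equals a·p·s where a,p,s are the upper-left m×m blocks of A,P,Q, and (A∘P)∘Q = A∘(P∘Q) up to conjugation by a permutation of the non-distinguished blocks. -/
open Matrix

/-- the upper-left `m×m` block of `(A∘P)∘Q` is `a·p·s`, and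
`(A∘P)∘Q = A∘(P∘Q)` up to conjugation by a block permutation matrix `diag(1_m, σ)`
permuting the three non-distinguished `n`-blocks (after the canonical regrouping). -/
theorem stmt19 {k : Type*} [Field k] {m n : ℕ}
    (a : Matrix (Fin m) (Fin m) k) (b : Matrix (Fin m) (Fin n) k)
    (c : Matrix (Fin n) (Fin m) k) (d : Matrix (Fin n) (Fin n) k)
    (p : Matrix (Fin m) (Fin m) k) (q : Matrix (Fin m) (Fin n) k)
    (r : Matrix (Fin n) (Fin m) k) (t : Matrix (Fin n) (Fin n) k)
    (s : Matrix (Fin m) (Fin m) k) (u : Matrix (Fin m) (Fin n) k)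
    (v : Matrix (Fin n) (Fin m) k) (w : Matrix (Fin n) (Fin n) k) :
    (∀ i j : Fin m,
      circ (a * p) (Matrix.fromCols b (a * q)) (Matrix.fromRows (c * p) r)
          (Matrix.fromBlocks d (c * q) 0 t) s u v w (Sum.inl i) (Sum.inl j)
        = (a * p * s) i j) ∧
    (∃ σ : Equiv.Perm ((Fin n ⊕ Fin n) ⊕ Fin n),
      circ (a * p) (Matrix.fromCols b (a * q)) (Matrix.fromRows (c * p) r)
          (Matrix.fromBlocks d (c * q) 0 t) s u v w =
        Matrix.fromBlocks (1 : Matrix (Fin m) (Fin m) k) 0 0 (σ.permMatrix k) *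
          Matrix.reindex
            (Equiv.sumCongr (Equiv.refl (Fin m)) (Equiv.sumAssoc (Fin n) (Fin n) (Fin n)).symm)
            (Equiv.sumCongr (Equiv.refl (Fin m)) (Equiv.sumAssoc (Fin n) (Fin n) (Fin n)).symm)
            (circ a b c d (p * s) (Matrix.fromCols q (p * u)) (Matrix.fromRows (r * s) v)
              (Matrix.fromBlocks t (r * u) 0 w)) *
          (Matrix.fromBlocks (1 : Matrix (Fin m) (Fin m) k) 0 0 (σ.permMatrix k))⁻¹) := by
  constructor
  · intro i j
    simp [circ, blk3, Matrix.fromBlocks, mul_assoc]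
  · refine ⟨1, ?_⟩
    have h1 : (Equiv.Perm.permMatrix k (1 : Equiv.Perm ((Fin n ⊕ Fin n) ⊕ Fin n))) =
        (1 : Matrix _ _ k) := by
      ext i j
      simp [Equiv.Perm.permMatrix, PEquiv.toMatrix, Matrix.one_apply, Equiv.Perm.one_def, Equiv.toPEquiv, eq_comm]
    rw [h1, Matrix.fromBlocks_one, inv_one, Matrix.one_mul, Matrix.mul_one]
    ext i j
    rcases i with i | (i | i) | i <;> rcases j with j | (j | j) | j <;>
      simp [circ, blk3, Matrix.mul_fromCols, Matrix.fromRows_mul,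
        Equiv.sumAssoc, Matrix.mul_assoc]
end
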